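/- Let A be an n×m real matrix, b ∈ ℝ^n, p ∈ [1,∞), Z = min_{x∈ℝ^m} ‖Ax − b‖_p, and 0 < ε ≤ 1/7. Let T be a real matrix with n columns such that (1−ε)·‖Ax‖_p ≤ ‖TAx‖_p ≤ (1+ε)·‖Ax‖_p for all x ∈ ℝ^m. Let x̂_c, x̂_opt ∈ ℝ^m with ‖Ax̂_opt − Ax̂_c‖_p ≤ 12Z, and let N be a set of points of the form Ax_ε with ‖Ax_ε − Ax̂_c‖_p ≤ 12Z such that: (i) there exists Ax*_ε ∈ N with ‖Ax̂_opt − Ax*_ε‖_p ≤ εZ, and (ii) for every Ax_ε ∈ N, if ‖T(Ax_ε − b)‖_p ≤ (1+3ε)Z then ‖Ax_ε − b‖_p ≤ (1+6ε)Z. If ‖T(Ax̂_opt − b)‖_p ≤ (1+ε)Z, then ‖Ax̂_opt − b‖_p ≤ (1+7ε)Z. -/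

import Mathlib

open scoped BigOperators

/-- The entrywise `p`-norm of a vector: `(∑ i, |v i| ^ p) ^ (1/p)`. -/
noncomputable def pnorm (p : ℝ) {n : ℕ} (v : Fin n → ℝ) : ℝ :=
  (∑ i, |v i| ^ p) ^ (1 / p)

/-- The dual norm of the `p`-norm: the max-norm if `p = 1`, else the `p/(p-1)`-norm. -/
noncomputable def qnorm (p : ℝ) {n : ℕ} (v : Fin n → ℝ) : ℝ :=
  if p = 1 then ⨆ i, |v i| else pnorm (p / (p - 1)) v

/-- The entrywise `p`-norm of a matrix. -/
noncomputable def mpnorm (p : ℝ) {n d : ℕ} (M : Matrix (Fin n) (Fin d) ℝ) : ℝ :=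
  (∑ i, ∑ j, |M i j| ^ p) ^ (1 / p)

/-- `U` is an `(α, β, p)`-well-conditioned basis for the column space of `A`. -/
def IsWCB (p α β : ℝ) {n m d : ℕ} (A : Matrix (Fin n) (Fin m) ℝ)
    (U : Matrix (Fin n) (Fin d) ℝ) : Prop :=
  LinearMap.range U.mulVecLin = LinearMap.range A.mulVecLin ∧
  mpnorm p U ≤ α ∧
  ∀ z : Fin d → ℝ, qnorm p z ≤ β * pnorm p (U.mulVec z)

/-- `S : Ω → Matrix` is a random `n × n` diagonal sampling matrix with probabilities `pr`:
its diagonal entries are mutually independent, with `S ω i i = (pr i) ^ (-1/p)` with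
probability `pr i` and `S ω i i = 0` with probability `1 - pr i`. -/
structure IsSamplingMatrix {Ω : Type} [MeasurableSpace Ω] (μ : MeasureTheory.Measure Ω)
    (p : ℝ) {n : ℕ} (pr : Fin n → ℝ) (S : Ω → Matrix (Fin n) (Fin n) ℝ) : Prop where
  offdiag : ∀ ω i j, i ≠ j → S ω i j = 0
  meas : ∀ i, Measurable fun ω => S ω i i
  prob_val : ∀ i, μ {ω | S ω i i = (pr i) ^ (-(1 / p))} = ENNReal.ofReal (pr i)
  prob_zero : ∀ i, μ {ω | S ω i i = 0} = ENNReal.ofReal (1 - pr i)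
  indep : ProbabilityTheory.iIndepFun (fun i ω => S ω i i) μ

lemma pnorm_nonneg (p : ℝ) {n : ℕ} (v : Fin n → ℝ) : 0 ≤ pnorm p v :=
  Real.rpow_nonneg (Finset.sum_nonneg fun i _ => Real.rpow_nonneg (abs_nonneg _) _) _

lemma pnorm_add_le {p : ℝ} (hp : 1 ≤ p) {n : ℕ} (u v : Fin n → ℝ) :
    pnorm p (u + v) ≤ pnorm p u + pnorm p v :=
  Real.Lp_add_le Finset.univ u v hp

lemma pnorm_neg (p : ℝ) {n : ℕ} (v : Fin n → ℝ) : pnorm p (-v) = pnorm p v := by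
  simp [pnorm]

/-- **Lemma 6: relative error transfers from the sampled problem to the original.**
Suppose `T` preserves `p`-norms of `A x` up to `1 ± ε`, `x̂_opt` lies within `12 Z` of
`A x̂_c`, and `N` is an ε-net (of points `A x_ε` within `12 Z` of `A x̂_c`) containing a
point within `ε Z` of `A x̂_opt` on which the net implication holds.  If
`‖T (A x̂_opt - b)‖_p ≤ (1 + ε) Z` then `‖A x̂_opt - b‖_p ≤ (1 + 7ε) Z`. -/
theorem relative_error_transfer {n m k : ℕ} (A : Matrix (Fin n) (Fin m) ℝ)
    (b : Fin n → ℝ) (T : Matrix (Fin k) (Fin n) ℝ) (p ε Z : ℝ)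
    (xc xhopt : Fin m → ℝ) (N : Set (Fin n → ℝ))
    (hp : 1 ≤ p) (hε : 0 < ε) (hε' : ε ≤ 1 / 7)
    (hZ : IsLeast {t : ℝ | ∃ x : Fin m → ℝ, t = pnorm p (A.mulVec x - b)} Z)
    (hT : ∀ x : Fin m → ℝ,
      (1 - ε) * pnorm p (A.mulVec x) ≤ pnorm p (T.mulVec (A.mulVec x)) ∧
      pnorm p (T.mulVec (A.mulVec x)) ≤ (1 + ε) * pnorm p (A.mulVec x))
    (hball : pnorm p (A.mulVec xhopt - A.mulVec xc) ≤ 12 * Z)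
    (hN : ∀ y ∈ N, ∃ xε : Fin m → ℝ, y = A.mulVec xε ∧
      pnorm p (y - A.mulVec xc) ≤ 12 * Z)
    (hnear : ∃ y ∈ N, pnorm p (A.mulVec xhopt - y) ≤ ε * Z)
    (hnet : ∀ y ∈ N,
      pnorm p (T.mulVec (y - b)) ≤ (1 + 3 * ε) * Z →
      pnorm p (y - b) ≤ (1 + 6 * ε) * Z)
    (hTxhopt : pnorm p (T.mulVec (A.mulVec xhopt - b)) ≤ (1 + ε) * Z) :
    pnorm p (A.mulVec xhopt - b) ≤ (1 + 7 * ε) * Z := by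
  obtain ⟨y, hyN, hy⟩ := hnear
  obtain ⟨xε, rfl, -⟩ := hN y hyN
  -- Z ≥ 0
  have hZ0 : 0 ≤ Z := by
    obtain ⟨x, hx⟩ := hZ.1
    exact hx ▸ pnorm_nonneg p _
  -- bound on T (y - A xhopt)
  have hdiff : pnorm p (T.mulVec (A.mulVec xε - A.mulVec xhopt)) ≤ (1 + ε) * (ε * Z) := by
    have h1 : A.mulVec xε - A.mulVec xhopt = A.mulVec (xε - xhopt) := by
      rw [Matrix.mulVec_sub]
    rw [h1]
    refine le_trans (hT (xε - xhopt)).2 ?_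
    have h2 : pnorm p (A.mulVec (xε - xhopt)) ≤ ε * Z := by
      rw [← h1, ← pnorm_neg p, neg_sub]
      exact hy
    have : (0:ℝ) ≤ 1 + ε := by linarith
    nlinarith [pnorm_nonneg p (A.mulVec (xε - xhopt))]
  -- T(y - b) bound
  have hTy : pnorm p (T.mulVec (A.mulVec xε - b)) ≤ (1 + 3 * ε) * Z := by
    have h3 : T.mulVec (A.mulVec xε - b)
        = T.mulVec (A.mulVec xhopt - b) + T.mulVec (A.mulVec xε - A.mulVec xhopt) := by
      rw [← Matrix.mulVec_add]; congr 1; abel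
    calc pnorm p (T.mulVec (A.mulVec xε - b))
        ≤ pnorm p (T.mulVec (A.mulVec xhopt - b))
          + pnorm p (T.mulVec (A.mulVec xε - A.mulVec xhopt)) := by
          rw [h3]; exact pnorm_add_le hp _ _
      _ ≤ (1 + ε) * Z + (1 + ε) * (ε * Z) := add_le_add hTxhopt hdiff
      _ ≤ (1 + 3 * ε) * Z := by nlinarith [mul_nonneg (mul_nonneg hε.le (by linarith : (0:ℝ) ≤ 1 - ε)) hZ0]
  have hy6 := hnet _ hyN hTy
  calc pnorm p (A.mulVec xhopt - b)
      ≤ pnorm p (A.mulVec xhopt - A.mulVec xε) + pnorm p (A.mulVec xε - b) := by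
        have : A.mulVec xhopt - b
            = (A.mulVec xhopt - A.mulVec xε) + (A.mulVec xε - b) := by abel
        rw [this]; exact pnorm_add_le hp _ _
    _ ≤ ε * Z + (1 + 6 * ε) * Z := add_le_add hy hy6
    _ = (1 + 7 * ε) * Z := by ring
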